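/- Fix k ≥ 1, integer partitions λ and μ of format (k+1)×k with μ ⊆ λ ⊆ Δ (i.e., λ_i ≤ k+1-i and μ_i ≤ k-i for all i ∈ [k]), and fix w ∈ S_{k+1} with w(i) ≤ k+1-λ_i for all i ∈ [k]. Then the number of (k+1)-cycles c ∈ S_{k+1} such that w(c(i)) ≤ k+1-μ_i for all i ∈ [k] equals (k-μ_1)(k-1-μ_2)···(1-μ_k), independently of the choice of w. -/

import Mathlib

open Finset Function

section Aux

variable {k : ℕ}

/-- the partial functional graph of `f` defined on positions `< m`. -/
private def gm (m : ℕ) (f : Fin m → Fin (k+1)) : Fin (k+1) → Fin (k+1) :=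
  fun x => if h : (x : ℕ) < m then f ⟨x, h⟩ else x

private lemma gm_lt {m : ℕ} {f : Fin m → Fin (k+1)} {x : Fin (k+1)} (h : (x:ℕ) < m) :
    gm m f x = f ⟨(x:ℕ), h⟩ := dif_pos h

private lemma gm_ge {m : ℕ} {f : Fin m → Fin (k+1)} {x : Fin (k+1)} (h : m ≤ (x:ℕ)) :
    gm m f x = x := dif_neg (by omega)

/-- acyclicity of the partial functional graph. -/
private def Acyc (m : ℕ) (f : Fin m → Fin (k+1)) : Prop :=
  ∀ x : Fin (k+1), ∃ t, m ≤ (((gm m f)^[t]) x : Fin (k+1)).val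

private lemma iter_agree {α : Type*} {g c : α → α} {z : α}
    (hag : ∀ x, x ≠ z → g x = c x) (x : α) :
    ∀ t, (∀ s, s < t → c^[s] x ≠ z) → g^[t] x = c^[t] x := by
  intro t
  induction t with
  | zero => intro _; rfl
  | succ n ih =>
    intro h
    rw [Function.iterate_succ_apply', Function.iterate_succ_apply',
      ih (fun s hs => h s (by omega)), hag _ (h n (by omega))]

private lemma gm_stall {m : ℕ} {f : Fin m → Fin (k+1)} {x : Fin (k+1)} {s t : ℕ}
    (hs : m ≤ (((gm m f)^[s]) x).val) (hst : s ≤ t) :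
    (gm m f)^[t] x = (gm m f)^[s] x := by
  obtain ⟨d, rfl⟩ := Nat.exists_eq_add_of_le hst
  have : s + d = d + s := by omega
  rw [this, Function.iterate_add_apply]
  exact Function.iterate_fixed (gm_ge hs) d

open Classical in
private noncomputable def DD (A : ℕ → Finset (Fin (k+1))) (m : ℕ) :
    Finset (Fin m → Fin (k+1)) :=
  univ.filter fun f => Function.Injective f ∧ (∀ i : Fin m, f i ∈ A (i : ℕ)) ∧ Acyc m f

private lemma mem_DD {A : ℕ → Finset (Fin (k+1))} {m : ℕ} {f : Fin m → Fin (k+1)} :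
    f ∈ DD A m ↔ Function.Injective f ∧ (∀ i : Fin m, f i ∈ A (i : ℕ)) ∧ Acyc m f := by
  classical
  simp [DD]

end Aux

section Aux2

variable {k : ℕ}

private lemma gm_agree {m : ℕ} (f' : Fin (m+1) → Fin (k+1)) (hm : m < k+1)
    (y : Fin (k+1)) (hy : y ≠ (⟨m, hm⟩ : Fin (k+1))) :
    gm m (Fin.init f') y = gm (m+1) f' y := by
  rcases lt_trichotomy ((y:ℕ)) m with h | h | h
  · rw [gm_lt h, gm_lt (show (y:ℕ) < m+1 by omega)]
    show f' (Fin.castSucc ⟨(y:ℕ), h⟩) = _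
    congr 1
  · exact absurd (Fin.ext h) hy
  · rw [gm_ge (by omega), gm_ge (by omega)]

private lemma mem_A_of_le {A : ℕ → Finset (Fin (k+1))} (hA : Monotone A)
    (hmem : ∀ j, (h : j < k) → (⟨j, Nat.lt_succ_of_lt h⟩ : Fin (k+1)) ∈ A j)
    {m : ℕ} (hm : m < k) {x : Fin (k+1)} (hx : (x:ℕ) ≤ m) : x ∈ A m := by
  have h1 : (x:ℕ) < k := by omega
  have := hmem (x:ℕ) h1
  have hx' : (⟨(x:ℕ), Nat.lt_succ_of_lt h1⟩ : Fin (k+1)) = x := Fin.ext rfl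
  rw [hx'] at this
  exact hA hx this

private lemma restrict_mem {A : ℕ → Finset (Fin (k+1))} {m : ℕ} (hm : m < k)
    {f' : Fin (m+1) → Fin (k+1)} (hf' : f' ∈ DD A (m+1)) :
    Fin.init f' ∈ DD A m := by
  obtain ⟨hinj, hcons, hacy⟩ := mem_DD.mp hf'
  refine mem_DD.mpr ⟨?_, ?_, ?_⟩
  · intro i j hij
    have : f' i.castSucc = f' j.castSucc := hij
    exact Fin.castSucc_injective m (hinj this)
  · intro i
    have := hcons i.castSucc
    simpa [Fin.init] using this
  · intro x
    obtain ⟨T, hT⟩ := hacy x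
    set g' := gm (m+1) f' with hg'
    have hex : ∃ t, m ≤ ((g'^[t]) x).val := ⟨T, by omega⟩
    set t0 := Nat.find hex with ht0
    have hspec : m ≤ ((g'^[t0]) x).val := Nat.find_spec hex
    have hmin : ∀ s, s < t0 → ((g'^[s]) x).val < m := by
      intro s hs
      have := Nat.find_min hex hs
      omega
    have hagree : (gm m (Fin.init f'))^[t0] x = g'^[t0] x := by
      refine iter_agree (z := (⟨m, by omega⟩ : Fin (k+1))) ?_ x t0 ?_
      · exact fun y hy => gm_agree f' (by omega) y hy
      · intro s hs h
        have := hmin s hs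
        rw [h] at this
        simp at this
    exact ⟨t0, by rw [hagree]; exact hspec⟩

end Aux2

section Aux3

variable {k : ℕ}

open Classical in
private noncomputable def Cset (m : ℕ) (f : Fin m → Fin (k+1)) (hm : m < k) :
    Finset (Fin (k+1)) :=
  univ.filter fun v => ∃ t, (gm m f)^[t] v = (⟨m, by omega⟩ : Fin (k+1))

private lemma mem_Cset {m : ℕ} {f : Fin m → Fin (k+1)} {hm : m < k} {v : Fin (k+1)} :
    v ∈ Cset m f hm ↔ ∃ t, (gm m f)^[t] v = (⟨m, by omega⟩ : Fin (k+1)) := by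
  classical
  simp [Cset]

private lemma Cset_self {m : ℕ} {f : Fin m → Fin (k+1)} {hm : m < k} :
    (⟨m, by omega⟩ : Fin (k+1)) ∈ Cset m f hm := mem_Cset.mpr ⟨0, rfl⟩

private lemma Cset_small {m : ℕ} {f : Fin m → Fin (k+1)} {hm : m < k} {x : Fin (k+1)}
    (hx : x ∈ Cset m f hm) : (x:ℕ) ≤ m := by
  by_contra h
  obtain ⟨t, ht⟩ := mem_Cset.mp hx
  rw [Function.iterate_fixed (gm_ge (by omega)) t] at ht
  subst ht
  simp at h

private lemma Cset_card {m : ℕ} {f : Fin m → Fin (k+1)} {hm : m < k}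
    (hinj : Function.Injective f) :
    ((Cset m f hm).erase ⟨m, by omega⟩).card = (Cset m f hm ∩ image f univ).card := by
  classical
  refine Finset.card_bij (fun x _ => gm m f x) ?_ ?_ ?_
  · intro x hx
    show gm m f x ∈ _
    obtain ⟨hxne, hxC⟩ := Finset.mem_erase.mp hx
    have hxlt : (x:ℕ) < m := by
      have h1 := Cset_small hxC
      have : (x:ℕ) ≠ m := fun h => hxne (Fin.ext h)
      omega
    obtain ⟨t, ht⟩ := mem_Cset.mp hxC
    refine Finset.mem_inter.mpr ⟨mem_Cset.mpr ?_, ?_⟩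
    · rcases t with _ | t'
      · exact absurd (Fin.ext_iff.mp ht) (by simp; omega)
      · exact ⟨t', by rw [← Function.iterate_succ_apply]; exact ht⟩
    · rw [gm_lt hxlt]
      exact Finset.mem_image_of_mem f (Finset.mem_univ _)
  · intro x hx y hy hxy
    obtain ⟨hxne, hxC⟩ := Finset.mem_erase.mp hx
    obtain ⟨hyne, hyC⟩ := Finset.mem_erase.mp hy
    have hxlt : (x:ℕ) < m := by
      have := Cset_small hxC; have : (x:ℕ) ≠ m := fun h => hxne (Fin.ext h); omega
    have hylt : (y:ℕ) < m := by
      have := Cset_small hyC; have : (y:ℕ) ≠ m := fun h => hyne (Fin.ext h); omega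
    have hxy' : gm m f x = gm m f y := hxy
    rw [gm_lt hxlt, gm_lt hylt] at hxy'
    have := hinj hxy'
    exact Fin.ext (congrArg Fin.val this : _)
  · intro y hy
    obtain ⟨hyC, hyim⟩ := Finset.mem_inter.mp hy
    obtain ⟨j, _, rfl⟩ := Finset.mem_image.mp hyim
    have hjlt : (j:ℕ) < m := j.isLt
    have hjk : (j:ℕ) < k + 1 := by omega
    have hgj : gm m f (⟨(j:ℕ), hjk⟩ : Fin (k+1)) = f j := by
      rw [gm_lt (show ((⟨(j:ℕ), hjk⟩ : Fin (k+1)):ℕ) < m from hjlt)]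
    refine ⟨⟨(j:ℕ), hjk⟩, Finset.mem_erase.mpr ⟨?_, ?_⟩, hgj⟩
    · intro h
      have := Fin.ext_iff.mp h
      simp at this
      omega
    · refine mem_Cset.mpr ?_
      obtain ⟨t, ht⟩ := mem_Cset.mp hyC
      exact ⟨t + 1, by rw [Function.iterate_succ_apply, hgj]; exact ht⟩

end Aux3

section Aux4

variable {k : ℕ}

private lemma snoc_mem {A : ℕ → Finset (Fin (k+1))} {m : ℕ} (hm : m < k)
    {f : Fin m → Fin (k+1)} (hinj : Function.Injective f)
    (hacy : Acyc m f) {v : Fin (k+1)}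
    (hvA : v ∈ A m) (hvim : v ∉ image f univ) (hvC : v ∉ Cset m f hm)
    (hcons : ∀ i : Fin m, f i ∈ A (i : ℕ)) :
    Fin.snoc f v ∈ DD A (m+1) := by
  have hmF : m < k + 1 := by omega
  set mF : Fin (k+1) := ⟨m, hmF⟩ with hmFdef
  refine mem_DD.mpr ⟨?_, ?_, ?_⟩
  · intro i j h
    rcases Fin.eq_castSucc_or_eq_last i with ⟨i', rfl⟩ | rfl <;>
      rcases Fin.eq_castSucc_or_eq_last j with ⟨j', rfl⟩ | rfl
    · simp only [Fin.snoc_castSucc] at h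
      exact congrArg Fin.castSucc (hinj h)
    · simp only [Fin.snoc_castSucc, Fin.snoc_last] at h
      exact (hvim (h ▸ Finset.mem_image_of_mem f (Finset.mem_univ i'))).elim
    · simp only [Fin.snoc_castSucc, Fin.snoc_last] at h
      exact (hvim (h ▸ Finset.mem_image_of_mem f (Finset.mem_univ j'))).elim
    · rfl
  · intro i
    rcases Fin.eq_castSucc_or_eq_last i with ⟨i', rfl⟩ | rfl
    · simpa only [Fin.snoc_castSucc, Fin.coe_castSucc] using hcons i'
    · simpa only [Fin.snoc_last, Fin.val_last] using hvA
  · set g' := gm (m+1) (Fin.snoc f v) with hg'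
    have hag : ∀ y, y ≠ mF → g' y = gm m f y := by
      intro y hy
      rw [hg', ← gm_agree (Fin.snoc f v) hmF y hy, Fin.init_snoc]
    have hop : ∀ y : Fin (k+1), ∃ t, m ≤ ((g'^[t]) y).val ∧ g'^[t] y = (gm m f)^[t] y := by
      intro y
      obtain ⟨T, hT⟩ := hacy y
      have hex : ∃ t, m ≤ (((gm m f)^[t]) y).val := ⟨T, hT⟩
      set t0 := Nat.find hex with ht0
      have hspec := Nat.find_spec hex
      have hmin : ∀ s, s < t0 → (((gm m f)^[s]) y).val < m := by
        intro s hs; have := Nat.find_min hex hs; omega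
      have hagree : g'^[t0] y = (gm m f)^[t0] y := by
        refine iter_agree (z := mF) hag y t0 ?_
        intro s hs h
        have := hmin s hs
        rw [h] at this
        simp [hmFdef] at this
      exact ⟨t0, by rw [hagree]; exact hspec, hagree⟩
    intro x
    obtain ⟨t0, h1, h2⟩ := hop x
    by_cases hx : m + 1 ≤ ((g'^[t0]) x).val
    · exact ⟨t0, hx⟩
    · have hxm : g'^[t0] x = mF := Fin.ext (by simp [hmFdef]; omega)
      have h3 : g' mF = v := by
        rw [hg', gm_lt (show (mF:ℕ) < m + 1 by simp [hmFdef])]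
        apply Fin.snoc_last
      have hstep : g'^[t0+1] x = v := by
        rw [Function.iterate_succ_apply', hxm, h3]
      obtain ⟨t2, h4, h5⟩ := hop v
      have h6 : m + 1 ≤ ((g'^[t2]) v).val := by
        rcases Nat.lt_or_ge (((g'^[t2]) v).val) (m+1) with h | h
        · exfalso
          apply hvC
          refine mem_Cset.mpr ⟨t2, ?_⟩
          rw [← h5]
          exact Fin.ext (by simp [hmFdef]; omega)
        · exact h
      refine ⟨t2 + (t0+1), ?_⟩
      rw [Function.iterate_add_apply, hstep]
      exact h6

end Aux4

section Aux5

variable {k : ℕ}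

private lemma last_val_mem {A : ℕ → Finset (Fin (k+1))} {m : ℕ} (hm : m < k)
    {f' : Fin (m+1) → Fin (k+1)} (hf' : f' ∈ DD A (m+1)) :
    f' (Fin.last m) ∈
      A m \ (image (Fin.init f') univ ∪ Cset m (Fin.init f') hm) := by
  obtain ⟨hinj', hcons', hacy'⟩ := mem_DD.mp hf'
  have hrf := restrict_mem hm hf'
  obtain ⟨hinj, hcons, hacy⟩ := mem_DD.mp hrf
  have hmF : m < k + 1 := by omega
  set mF : Fin (k+1) := ⟨m, hmF⟩ with hmFdef
  set v := f' (Fin.last m) with hvdef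
  set g : Fin (k+1) → Fin (k+1) := gm m (Fin.init f') with hgdef
  set g' : Fin (k+1) → Fin (k+1) := gm (m+1) f' with hg'def
  refine Finset.mem_sdiff.mpr ⟨?_, ?_⟩
  · simpa only [Fin.val_last] using hcons' (Fin.last m)
  · rw [Finset.mem_union]
    push_neg
    constructor
    · intro hvim
      obtain ⟨i, _, hi⟩ := Finset.mem_image.mp hvim
      have : f' i.castSucc = f' (Fin.last m) := hi
      have := hinj' this
      exact absurd this (Fin.ne_last_of_lt (Fin.castSucc_lt_last i))
    · intro hvC
      obtain ⟨tc, htc⟩ := mem_Cset.mp hvC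
      have hex : ∃ t, m ≤ ((g^[t]) v).val := ⟨tc, by rw [htc]⟩
      set t0 := Nat.find hex with ht0
      have hspec := Nat.find_spec hex
      have hmin : ∀ s, s < t0 → ((g^[s]) v).val < m := by
        intro s hs; have := Nat.find_min hex hs; omega
      have hle : t0 ≤ tc := Nat.find_min' hex (by rw [htc])
      have hstall : g^[t0] v = mF := by
        have := gm_stall (f := Fin.init f') hspec hle
        rw [htc] at this
        exact this.symm
      have hag : ∀ y, y ≠ mF → g' y = g y := by
        intro y hy
        rw [hg'def, hgdef, gm_agree f' hmF y hy]
      have hagree : ∀ r, r ≤ t0 → g'^[r] v = g^[r] v := by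
        intro r hr
        refine iter_agree (z := mF) hag v r ?_
        intro s hs h
        have := hmin s (by omega)
        rw [h] at this
        simp [hmFdef] at this
      have h3 : g' mF = v := by
        rw [hg'def, gm_lt (show (mF:ℕ) < m + 1 by simp [hmFdef])]
        show f' _ = f' (Fin.last m)
        congr 1
      have hper : g'^[t0+1] v = v := by
        rw [Function.iterate_succ_apply', hagree t0 le_rfl, hstall, h3]
      have hq : ∀ q, g'^[q * (t0+1)] v = v := by
        intro q
        induction q with
        | zero => simp
        | succ n ih =>
          rw [Nat.succ_mul, Function.iterate_add_apply, hper, ih]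
      obtain ⟨T, hT⟩ := hacy' v
      have hTr : g'^[T] v = g'^[T % (t0+1)] v := by
        conv_lhs => rw [← Nat.mod_add_div' T (t0+1)]
        rw [Function.iterate_add_apply, hq (T / (t0+1))]
      have hr : T % (t0+1) ≤ t0 := by
        have := Nat.mod_lt T (show 0 < t0+1 by omega)
        omega
      have hbad : ((g'^[T % (t0+1)]) v).val ≤ m := by
        rcases Nat.lt_or_ge (T % (t0+1)) t0 with h | h
        · rw [hagree _ (le_of_lt h)]
          exact le_of_lt (hmin _ h)
        · have : T % (t0+1) = t0 := by omega
          rw [this, hagree t0 le_rfl, hstall]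
      rw [hTr] at hT
      omega

end Aux5

section Aux6

variable {k : ℕ}

private lemma valid_card {A : ℕ → Finset (Fin (k+1))} (hA : Monotone A)
    (hmem : ∀ j, (h : j < k) → (⟨j, Nat.lt_succ_of_lt h⟩ : Fin (k+1)) ∈ A j)
    {m : ℕ} (hm : m < k) {f : Fin m → Fin (k+1)} (hinj : Function.Injective f)
    (hcons : ∀ i : Fin m, f i ∈ A (i : ℕ)) :
    (A m \ (image f univ ∪ Cset m f hm)).card = (A m).card - (m + 1) := by
  classical
  have him : (image f univ).card = m := by
    rw [Finset.card_image_of_injective _ hinj, Finset.card_univ, Fintype.card_fin]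
  have hCcard : (Cset m f hm).card = (Cset m f hm ∩ image f univ).card + 1 := by
    rw [← Cset_card hinj, Finset.card_erase_add_one (Cset_self)]
  have hun := Finset.card_union_add_card_inter (image f univ) (Cset m f hm)
  have hic : (image f univ ∩ Cset m f hm).card = (Cset m f hm ∩ image f univ).card := by
    rw [Finset.inter_comm]
  have hU : (image f univ ∪ Cset m f hm).card = m + 1 := by omega
  have hsub : (image f univ ∪ Cset m f hm) ⊆ A m := by
    intro x hx
    rcases Finset.mem_union.mp hx with hx | hx
    · obtain ⟨i, _, rfl⟩ := Finset.mem_image.mp hx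
      exact hA (show ((i:ℕ) : ℕ) ≤ m by omega) (hcons i)
    · exact mem_A_of_le hA hmem hm (Cset_small hx)
  rw [Finset.card_sdiff_of_subset hsub, hU]

private lemma step {A : ℕ → Finset (Fin (k+1))} (hA : Monotone A)
    (hmem : ∀ j, (h : j < k) → (⟨j, Nat.lt_succ_of_lt h⟩ : Fin (k+1)) ∈ A j)
    {m : ℕ} (hm : m < k) :
    (DD A (m+1)).card = (DD A m).card * ((A m).card - (m+1)) := by
  classical
  rw [Finset.card_eq_sum_card_fiberwise
    (f := fun f' : Fin (m+1) → Fin (k+1) => Fin.init f') (t := DD A m)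
    (fun f' hf' => restrict_mem hm hf')]
  rw [Finset.sum_congr rfl (fun f hf => ?_), Finset.sum_const, smul_eq_mul]
  -- fiber card
  obtain ⟨hinj, hcons, hacy⟩ := mem_DD.mp hf
  rw [← valid_card hA hmem hm hinj hcons]
  refine Finset.card_bij (fun f' _ => f' (Fin.last m)) ?_ ?_ ?_
  · intro f' hf'
    obtain ⟨hf'DD, hres⟩ := Finset.mem_filter.mp hf'
    have := last_val_mem hm hf'DD
    rwa [hres] at this
  · intro f1 h1 f2 h2 hval
    obtain ⟨h1DD, h1res⟩ := Finset.mem_filter.mp h1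
    obtain ⟨h2DD, h2res⟩ := Finset.mem_filter.mp h2
    have e1 : f1 = Fin.snoc (Fin.init f1) (f1 (Fin.last m)) := (Fin.snoc_init_self f1).symm
    have e2 : f2 = Fin.snoc (Fin.init f2) (f2 (Fin.last m)) := (Fin.snoc_init_self f2).symm
    have hval' : f1 (Fin.last m) = f2 (Fin.last m) := hval
    rw [e1, e2, h1res, h2res, hval']
  · intro v hv
    obtain ⟨hvA, hvUn⟩ := Finset.mem_sdiff.mp hv
    rw [Finset.mem_union] at hvUn
    push_neg at hvUn
    refine ⟨Fin.snoc f v, Finset.mem_filter.mpr ⟨snoc_mem hm hinj hacy hvA hvUn.1 hvUn.2 hcons, by simp⟩, ?_⟩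
    simp

private lemma DD_card {A : ℕ → Finset (Fin (k+1))} (hA : Monotone A)
    (hmem : ∀ j, (h : j < k) → (⟨j, Nat.lt_succ_of_lt h⟩ : Fin (k+1)) ∈ A j) :
    ∀ m, m ≤ k → (DD A m).card = ∏ i ∈ Finset.range m, ((A i).card - (i+1)) := by
  intro m
  induction m with
  | zero =>
    intro _
    rw [Finset.range_zero, Finset.prod_empty]
    have : DD A 0 = univ := by
      refine Finset.eq_univ_of_forall ?_
      intro f
      refine mem_DD.mpr ⟨fun i => i.elim0, fun i => i.elim0, fun x => ⟨0, Nat.zero_le _⟩⟩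
    rw [this, Finset.card_univ]
    simp
  | succ n ih =>
    intro hn
    rw [step hA hmem (show n < k by omega), ih (by omega), Finset.prod_range_succ]

end Aux6

section Aux7

variable {k : ℕ}

private lemma cyc_restrict_acyc {c : Equiv.Perm (Fin (k+1))}
    (h1 : c.IsCycle) (h2 : c.support.card = k + 1) :
    Acyc k (fun i : Fin k => c i.castSucc) := by
  set f : Fin k → Fin (k+1) := fun i => c i.castSucc with hfdef
  have hsup : c.support = univ := Finset.eq_univ_of_card _ (by rw [h2, Fintype.card_fin])
  have hne : ∀ x : Fin (k+1), c x ≠ x := fun x =>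
    Equiv.Perm.mem_support.mp (hsup ▸ Finset.mem_univ x)
  intro x
  obtain ⟨T, hT⟩ := h1.exists_pow_eq (hne x) (hne (Fin.last k))
  have hT' : c^[T] x = Fin.last k := by rwa [Equiv.Perm.coe_pow] at hT
  have hexc : ∃ t, c^[t] x = Fin.last k := ⟨T, hT'⟩
  set t0 := Nat.find hexc with ht0
  have hspec := Nat.find_spec hexc
  have hmin := fun s hs => Nat.find_min hexc (m := s) hs
  have hag : ∀ y : Fin (k+1), y ≠ Fin.last k → gm k f y = c y := by
    intro y hy
    have hylt : (y:ℕ) < k := by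
      have := y.isLt
      have : (y:ℕ) ≠ k := fun h => hy (Fin.ext (by simp [h]))
      omega
    rw [gm_lt hylt, hfdef]
    exact congrArg c (Fin.ext rfl)
  have hagree : (gm k f)^[t0] x = c^[t0] x := iter_agree hag x t0 hmin
  refine ⟨t0, ?_⟩
  rw [hagree]
  have hv : ((⇑c)^[t0] x) = Fin.last k := hspec
  rw [hv, Fin.val_last]

private lemma acyc_extend {f : Fin k → Fin (k+1)} (hk : 1 ≤ k)
    (hinj : Function.Injective f) (hacy : Acyc k f) :
    ∃ c : Equiv.Perm (Fin (k+1)), c.IsCycle ∧ c.support.card = k + 1 ∧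
      (∀ i : Fin k, c i.castSucc = f i) := by
  classical
  have hv0 : ∃ v : Fin (k+1), v ∉ image f univ := by
    by_contra h
    push_neg at h
    have hsub : (univ : Finset (Fin (k+1))) ⊆ image f univ := fun x _ => h x
    have := Finset.card_le_card hsub
    rw [Finset.card_univ, Fintype.card_fin,
      Finset.card_image_of_injective _ hinj, Finset.card_univ, Fintype.card_fin] at this
    omega
  obtain ⟨v0, hv0⟩ := hv0
  set F : Fin (k+1) → Fin (k+1) := fun x => if h : (x:ℕ) < k then f ⟨(x:ℕ), h⟩ else v0
    with hFdef
  have hFinj : Function.Injective F := by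
    intro a b hab
    simp only [hFdef] at hab
    by_cases ha : (a:ℕ) < k <;> by_cases hb : (b:ℕ) < k
    · rw [dif_pos ha, dif_pos hb] at hab
      exact Fin.ext (congrArg Fin.val (hinj hab) : _)
    · rw [dif_pos ha, dif_neg hb] at hab
      exact (hv0 (hab ▸ Finset.mem_image_of_mem f (Finset.mem_univ _))).elim
    · rw [dif_neg ha, dif_pos hb] at hab
      exact (hv0 (hab.symm ▸ Finset.mem_image_of_mem f (Finset.mem_univ _))).elim
    · have := a.isLt; have := b.isLt
      exact Fin.ext (by omega)
  set c : Equiv.Perm (Fin (k+1)) := Equiv.ofBijective F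
    ((Finite.injective_iff_bijective).mp hFinj) with hcdef
  have hcF : ∀ x, c x = F x := fun x => rfl
  have hag : ∀ y : Fin (k+1), y ≠ Fin.last k → c y = gm k f y := by
    intro y hy
    have hylt : (y:ℕ) < k := by
      have := y.isLt
      have : (y:ℕ) ≠ k := fun h => hy (Fin.ext (by simp [h]))
      omega
    rw [hcF, hFdef, gm_lt hylt]
    simp only [dif_pos hylt]
  have hreach : ∀ x, ∃ t, c^[t] x = Fin.last k := by
    intro x
    obtain ⟨T, hT⟩ := hacy x
    have hex : ∃ t, k ≤ (((gm k f)^[t]) x).val := ⟨T, hT⟩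
    set t0 := Nat.find hex with ht0
    have hspec : k ≤ (((gm k f)^[t0]) x).val := Nat.find_spec hex
    have hmin : ∀ s, s < t0 → (((gm k f)^[s]) x).val < k := by
      intro s hs; have := Nat.find_min hex hs; omega
    have hagree : c^[t0] x = (gm k f)^[t0] x := by
      refine iter_agree (z := Fin.last k) hag x t0 ?_
      intro s hs h
      have := hmin s hs
      rw [h] at this
      simp at this
    refine ⟨t0, Fin.ext ?_⟩
    have he : ((⇑c)^[t0] x) = (gm k f)^[t0] x := hagree
    rw [he, Fin.val_last]
    have h2 := (((gm k f)^[t0]) x).isLt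
    omega
  have hclast : c (Fin.last k) ≠ Fin.last k := by
    intro h
    obtain ⟨t, ht⟩ := hreach (⟨0, by omega⟩ : Fin (k+1))
    have hexc : ∃ s, c^[s] (⟨0, by omega⟩ : Fin (k+1)) = Fin.last k := ⟨t, ht⟩
    have hspec := Nat.find_spec hexc
    rcases Nat.eq_zero_or_pos (Nat.find hexc) with h0 | h0
    · rw [h0] at hspec
      have : (0:ℕ) = k := congrArg Fin.val hspec
      omega
    · have h1 : Nat.find hexc - 1 < Nat.find hexc := by omega
      apply Nat.find_min hexc h1
      apply c.injective
      rw [← Function.iterate_succ_apply' c, Nat.succ_eq_add_one, Nat.sub_add_cancel h0,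
        hspec, h]
  have hnofix : ∀ x, c x ≠ x := by
    intro x hx
    obtain ⟨t, ht⟩ := hreach x
    rw [Function.iterate_fixed hx] at ht
    subst ht
    exact hclast hx
  have hsup : c.support = univ :=
    Finset.eq_univ_of_forall (fun x => Equiv.Perm.mem_support.mpr (hnofix x))
  refine ⟨c, ?_, ?_, ?_⟩
  · refine ⟨Fin.last k, hclast, ?_⟩
    intro y _
    have hsc : c.SameCycle y (Fin.last k) := by
      obtain ⟨t, ht⟩ := hreach y
      exact ⟨(t:ℤ), by rw [zpow_natCast, Equiv.Perm.coe_pow]; exact ht⟩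
    exact hsc.symm
  · rw [hsup, Finset.card_univ, Fintype.card_fin]
  · intro i
    rw [hcF, hFdef]
    have : ((i.castSucc : Fin (k+1)):ℕ) < k := by simpa using i.isLt
    simp only [dif_pos this]
    exact congrArg f (Fin.ext (by simp))

end Aux7

section Aux8

variable {k : ℕ}

private lemma count_filter (w : Equiv.Perm (Fin (k+1))) (q : ℕ) (hq : q ≤ k + 1) :
    (univ.filter fun x : Fin (k+1) => ((w x):ℕ) < q).card = q := by
  have h1 : (univ.filter fun x : Fin (k+1) => ((w x):ℕ) < q).card
      = (univ.filter fun y : Fin (k+1) => (y:ℕ) < q).card := by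
    refine Finset.card_bij (fun x _ => w x) ?_ ?_ ?_
    · intro x hx
      simp only [Finset.mem_filter, Finset.mem_univ, true_and] at hx ⊢
      exact hx
    · intro x _ y _ h
      exact w.injective h
    · intro y hy
      simp only [Finset.mem_filter, Finset.mem_univ, true_and] at hy
      exact ⟨w.symm y, by simp [hy], by simp⟩
  rw [h1]
  have h2 : (univ.filter fun y : Fin (k+1) => (y:ℕ) < q).card = (Finset.range q).card := by
    refine Finset.card_bij (fun y _ => (y:ℕ)) ?_ ?_ ?_
    · intro y hy
      simp only [Finset.mem_filter, Finset.mem_univ, true_and] at hy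
      exact Finset.mem_range.mpr hy
    · intro y _ z _ h
      exact Fin.ext h
    · intro j hj
      have hj' := Finset.mem_range.mp hj
      exact ⟨⟨j, by omega⟩, by simp [hj'], rfl⟩
  rw [h2, Finset.card_range]

end Aux8

/-- Fix partitions `μ ⊆ λ ⊆ Δ` and `w ∈ S_{k+1}` with `w(i) ≤ k+1-λ_i`.  The number
of `(k+1)`-cycles `c ∈ S_{k+1}` such that `w(c(i)) ≤ k+1-μ_i` for all `i ∈ [k]`
equals `(k-μ_1)(k-1-μ_2)⋯(1-μ_k)`, independently of `w`. (0-indexed.) -/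
theorem stmt7 (k : ℕ) (hk : 1 ≤ k) (lam mu : Fin k → ℕ)
    (hlmono : Antitone lam) (hmmono : Antitone mu)
    (hlb : ∀ i : Fin k, lam i ≤ k - (i : ℕ))
    (hmb : ∀ i : Fin k, mu i ≤ k - ((i : ℕ) + 1))
    (hml : ∀ i : Fin k, mu i ≤ lam i)
    (w : Equiv.Perm (Fin (k + 1)))
    (hw : ∀ i : Fin k, (w i.castSucc : ℕ) + 1 ≤ k + 1 - lam i) :
    Nat.card {c : Equiv.Perm (Fin (k + 1)) //
        c.IsCycle ∧ c.support.card = k + 1 ∧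
        ∀ i : Fin k, (w (c i.castSucc) : ℕ) + 1 ≤ k + 1 - mu i} =
      ∏ i : Fin k, (k - (i : ℕ) - mu i) := by
  classical
  set A : ℕ → Finset (Fin (k+1)) := fun i =>
    if h : i < k then univ.filter (fun x => ((w x):ℕ) + 1 ≤ k + 1 - mu ⟨i, h⟩) else univ
    with hAdef
  have hA : Monotone A := by
    intro i j hij
    by_cases hik : i < k
    · by_cases hjk : j < k
      · rw [hAdef]
        simp only [dif_pos hik, dif_pos hjk]
        intro x hx
        simp only [Finset.mem_filter, Finset.mem_univ, true_and] at hx ⊢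
        have hmu : mu ⟨j, hjk⟩ ≤ mu ⟨i, hik⟩ := hmmono (by exact hij)
        omega
      · rw [hAdef]
        simp only [dif_neg hjk]
        exact Finset.subset_univ _
    · have hjk : ¬ j < k := by omega
      rw [hAdef]
      simp only [dif_neg hik, dif_neg hjk]
      exact le_rfl
  have hmem : ∀ j, (h : j < k) → (⟨j, Nat.lt_succ_of_lt h⟩ : Fin (k+1)) ∈ A j := by
    intro j h
    rw [hAdef]
    simp only [dif_pos h, Finset.mem_filter, Finset.mem_univ, true_and]
    have h1 := hw ⟨j, h⟩
    have h2 : (Fin.castSucc (⟨j, h⟩ : Fin k)) = (⟨j, Nat.lt_succ_of_lt h⟩ : Fin (k+1)) :=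
      Fin.ext rfl
    rw [h2] at h1
    have h3 : k + 1 - lam ⟨j, h⟩ ≤ k + 1 - mu ⟨j, h⟩ := Nat.sub_le_sub_left (hml _) _
    omega
  have hcard : ∀ j, (h : j < k) → (A j).card = k + 1 - mu ⟨j, h⟩ := by
    intro j h
    rw [hAdef]
    simp only [dif_pos h]
    have : (univ.filter fun x : Fin (k+1) => ((w x):ℕ) + 1 ≤ k + 1 - mu ⟨j, h⟩)
        = (univ.filter fun x : Fin (k+1) => ((w x):ℕ) < k + 1 - mu ⟨j, h⟩) := by
      apply Finset.filter_congr
      intro x _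
      constructor <;> intro <;> omega
    rw [this, count_filter w _ (by omega)]
  -- reduce Nat.card to a Finset count
  rw [Nat.card_eq_fintype_card, Fintype.card_subtype]
  -- biject with DD A k
  have hbij : (univ.filter fun c : Equiv.Perm (Fin (k + 1)) =>
      c.IsCycle ∧ c.support.card = k + 1 ∧
        ∀ i : Fin k, ((w (c i.castSucc)):ℕ) + 1 ≤ k + 1 - mu i).card = (DD A k).card := by
    refine Finset.card_bij (fun c _ => fun i : Fin k => c i.castSucc) ?_ ?_ ?_
    · intro c hc
      obtain ⟨h1, h2, h3⟩ := (Finset.mem_filter.mp hc).2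
      refine mem_DD.mpr ⟨?_, ?_, cyc_restrict_acyc h1 h2⟩
      · intro i j hij
        exact Fin.castSucc_injective k (c.injective hij)
      · intro i
        rw [hAdef]
        simp only [dif_pos i.isLt, Finset.mem_filter, Finset.mem_univ, true_and]
        have := h3 i
        have he : (⟨(i:ℕ), i.isLt⟩ : Fin k) = i := Fin.ext rfl
        rw [he]
        exact this
    · intro c1 h1 c2 h2 hres
      have hres' : (fun i : Fin k => c1 i.castSucc) = fun i : Fin k => c2 i.castSucc := hres
      have hlt : ∀ x : Fin (k+1), (x:ℕ) < k → c1 x = c2 x := by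
        intro x hx
        have := congrFun hres' ⟨(x:ℕ), hx⟩
        simpa [show Fin.castSucc (⟨(x:ℕ), hx⟩ : Fin k) = x from Fin.ext rfl] using this
      have hlast : c1 (Fin.last k) = c2 (Fin.last k) := by
        set y := c2.symm (c1 (Fin.last k)) with hy
        have hcy : c2 y = c1 (Fin.last k) := c2.apply_symm_apply _
        by_cases hyk : (y:ℕ) < k
        · exfalso
          have h4 : c1 y = c1 (Fin.last k) := (hlt y hyk).trans hcy
          have := c1.injective h4
          rw [this] at hyk
          simp at hyk
        · have h5 : y = Fin.last k := Fin.ext (by have := y.isLt; simp; omega)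
          rw [← h5, hcy]
          exact congrArg c1 h5
      refine Equiv.ext ?_
      intro x
      by_cases hx : (x:ℕ) < k
      · exact hlt x hx
      · have : x = Fin.last k := Fin.ext (by have := x.isLt; simp; omega)
        rw [this]
        exact hlast
    · intro f hf
      obtain ⟨hinj, hcons, hacy⟩ := mem_DD.mp hf
      obtain ⟨c, hc1, hc2, hc3⟩ := acyc_extend hk hinj hacy
      refine ⟨c, Finset.mem_filter.mpr ⟨Finset.mem_univ _, hc1, hc2, ?_⟩, funext hc3⟩
      intro i
      rw [hc3 i]
      have := hcons i
      rw [hAdef] at this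
      simp only [dif_pos i.isLt, Finset.mem_filter, Finset.mem_univ, true_and] at this
      have he : (⟨(i:ℕ), i.isLt⟩ : Fin k) = i := Fin.ext rfl
      rw [he] at this
      exact this
  rw [hbij, DD_card hA hmem k le_rfl]
  -- compute the product
  rw [← Fin.prod_univ_eq_prod_range (fun j => (A j).card - (j+1)) k]
  apply Finset.prod_congr rfl
  intro i _
  rw [hcard (i:ℕ) i.isLt]
  have h6 := hmb i
  have h7 : (⟨(i:ℕ), i.isLt⟩ : Fin k) = i := Fin.ext rfl
  rw [h7]
  have h8 : (i:ℕ) + 1 ≤ k := i.isLt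
  omega
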